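/- For a functor G : C → D where D has binary products, the forgetful functor from the comma category D ↓ G (the scone of G) to D × C is comonadic. -/

import Mathlib

/-!
For a functor `G : C ⥤ D` where `D` has binary products, the forgetful functor from the
comma category `D ↓ G` (the scone of `G`) to `D × C` is comonadic.
-/

universe v₁ v₂ u₁ u₂

open CategoryTheory CategoryTheory.Limits


universe w w'

open CategoryTheory CategoryTheory.Limits

namespace SconeAux

variable {B : Type u₁} [Category.{v₁} B] {C : Type u₂} [Category.{v₂} C]
variable {J : Type w} [Category.{w'} J]

/-- Auxiliary cone pairing a cone over the first component with the second component of `c`. -/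
@[simps]
def pairConeFst (F : J ⥤ B × C) (c : Cone F) (s : Cone (F ⋙ CategoryTheory.Prod.fst B C)) :
    Cone F where
  pt := (s.pt, c.pt.2)
  π := { app := fun j => (s.π.app j, (c.π.app j).2),
         naturality := fun j j' u => by
           apply Prod.ext
           · show 𝟙 s.pt ≫ s.π.app j' = s.π.app j ≫ (F.map u).1
             rw [Category.id_comp]; exact (s.w u).symm
           · show 𝟙 c.pt.2 ≫ (c.π.app j').2 = (c.π.app j).2 ≫ (F.map u).2
             rw [Category.id_comp]; exact congrArg Prod.snd (c.w u).symm }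

@[simps]
def pairConeSnd (F : J ⥤ B × C) (c : Cone F) (s : Cone (F ⋙ CategoryTheory.Prod.snd B C)) :
    Cone F where
  pt := (c.pt.1, s.pt)
  π := { app := fun j => ((c.π.app j).1, s.π.app j),
         naturality := fun j j' u => by
           apply Prod.ext
           · show 𝟙 c.pt.1 ≫ (c.π.app j').1 = (c.π.app j).1 ≫ (F.map u).1
             rw [Category.id_comp]; exact congrArg Prod.fst (c.w u).symm
           · show 𝟙 s.pt ≫ s.π.app j' = s.π.app j ≫ (F.map u).2
             rw [Category.id_comp]; exact (s.w u).symm }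

lemma prodFst_preservesLimit (F : J ⥤ B × C) :
    PreservesLimit F (CategoryTheory.Prod.fst B C) := by
  constructor
  intro c t
  constructor
  refine ⟨fun s => (t.lift (pairConeFst F c s)).1,
          fun s j => congrArg Prod.fst (t.fac (pairConeFst F c s) j), ?_⟩
  intro s m hm
  have := t.uniq (pairConeFst F c s) (m, 𝟙 c.pt.2) (by
    intro j
    apply Prod.ext
    · exact hm j
    · exact Category.id_comp _)
  exact congrArg Prod.fst this

lemma prodSnd_preservesLimit (F : J ⥤ B × C) :
    PreservesLimit F (CategoryTheory.Prod.snd B C) := by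
  constructor
  intro c t
  constructor
  refine ⟨fun s => (t.lift (pairConeSnd F c s)).2,
          fun s j => congrArg Prod.snd (t.fac (pairConeSnd F c s) j), ?_⟩
  intro s m hm
  have := t.uniq (pairConeSnd F c s) (𝟙 c.pt.1, m) (by
    intro j
    apply Prod.ext
    · exact Category.id_comp _
    · exact hm j)
  exact congrArg Prod.snd this

section Scone

variable {C : Type u₁} [Category.{v₁} C] {D : Type u₂} [Category.{v₂} D]
variable (G : C ⥤ D) [HasBinaryProducts D]

/-- The forgetful functor from the scone. -/
abbrev sconeForget : Comma (𝟭 D) G ⥤ D × C :=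
  (Comma.fst (𝟭 D) G).prod' (Comma.snd (𝟭 D) G)

/-- The right adjoint to the forgetful functor from the scone. -/
@[simps]
noncomputable def sconeRightAdjoint : D × C ⥤ Comma (𝟭 D) G where
  obj P := { left := Limits.prod P.1 (G.obj P.2), right := P.2, hom := Limits.prod.snd }
  map k := { left := Limits.prod.map k.1 (G.map k.2), right := k.2,
             w := by simp }
  map_id P := by
    apply CommaMorphism.ext
    · simp [prod.map_id_id]
    · rfl
  map_comp k l := by
    apply CommaMorphism.ext
    · simp [prod.map_map]
    · rfl

/-- The adjunction between the scone forgetful functor and its right adjoint. -/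
noncomputable def sconeAdjunction : sconeForget G ⊣ sconeRightAdjoint G :=
  Adjunction.mkOfHomEquiv
    { homEquiv := fun A P =>
        { toFun := fun k =>
            { left := Limits.prod.lift k.1 (A.hom ≫ G.map k.2), right := k.2,
              w := Limits.prod.lift_snd _ _ }
          invFun := fun m => (m.left ≫ Limits.prod.fst, m.right)
          left_inv := fun k => by
            apply Prod.ext
            · exact Limits.prod.lift_fst _ _
            · rfl
          right_inv := fun m => by
            apply CommaMorphism.ext
            · apply Limits.prod.hom_ext
              · exact Limits.prod.lift_fst _ _
              · exact (Limits.prod.lift_snd _ _).trans m.w.symm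
            · rfl }
      homEquiv_naturality_left_symm := fun f g => by
        apply Prod.ext
        · exact Category.assoc _ _ _
        · rfl
      homEquiv_naturality_right := fun f g => by
        apply CommaMorphism.ext
        · apply Limits.prod.hom_ext
          · exact (Limits.prod.lift_fst _ _).trans ((Category.assoc _ _ _).trans ((whisker_eq _ (Limits.prod.map_fst _ _)).trans (Limits.prod.lift_fst_assoc _ _ _))).symm
          · exact (Limits.prod.lift_snd _ _).trans ((whisker_eq _ (G.map_comp f.2 g.2)).trans ((Category.assoc _ _ _).trans ((whisker_eq _ (Limits.prod.map_snd _ _)).trans ((Limits.prod.lift_snd_assoc _ _ _).trans (Category.assoc _ _ _)))).symm)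
        · rfl }

instance sconeForget_reflectsIsos : (sconeForget G).ReflectsIsomorphisms := by
  constructor
  intro A B h hiso
  have h1 : IsIso h.left := by
    have : IsIso ((sconeForget G).map h).1 :=
      (inferInstance : IsIso ((CategoryTheory.Prod.fst D C).map ((sconeForget G).map h)))
    exact this
  have h2 : IsIso h.right := by
    have : IsIso ((sconeForget G).map h).2 :=
      (inferInstance : IsIso ((CategoryTheory.Prod.snd D C).map ((sconeForget G).map h)))
    exact this
  have : h = (Comma.isoMk (asIso h.left) (asIso h.right) h.w).hom := by
    apply CommaMorphism.ext <;> rfl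
  rw [this]
  infer_instance


/-- Any functor preserves the equalizer of a split pair. -/
lemma preservesLimit_parallelPair_of_split {C' : Type u₁} [Category.{v₁} C'] {D' : Type u₂}
    [Category.{v₂} D'] {X Y : C'} (f g : X ⟶ Y) [HasSplitEqualizer f g] (F : C' ⥤ D') :
    PreservesLimit (parallelPair f g) F :=
  preservesLimit_of_preserves_limit_cone
    (HasSplitEqualizer.isSplitEqualizer f g).isEqualizer
    ((isLimitMapConeForkEquiv F _).symm
      (((HasSplitEqualizer.isSplitEqualizer f g).map F).isEqualizer))

/-- The scone forgetful functor creates limits of cosplit parallel pairs. -/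
noncomputable def sconeCreatesLimit {A B : Comma (𝟭 D) G} (f g : A ⟶ B)
    [(sconeForget G).IsCosplitPair f g] :
    CreatesLimit (parallelPair f g) (sconeForget G) := by
  have hsplit : HasSplitEqualizer f.right g.right :=
    inferInstanceAs (HasSplitEqualizer ((CategoryTheory.Prod.snd D C).map ((sconeForget G).map f))
      ((CategoryTheory.Prod.snd D C).map ((sconeForget G).map g)))
  have hsplit' : HasSplitEqualizer
      ((parallelPair f g ⋙ Comma.snd (𝟭 D) G).map WalkingParallelPairHom.left)
      ((parallelPair f g ⋙ Comma.snd (𝟭 D) G).map WalkingParallelPairHom.right) := hsplit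
  have hpres : PreservesLimit (parallelPair
      ((parallelPair f g ⋙ Comma.snd (𝟭 D) G).map WalkingParallelPairHom.left)
      ((parallelPair f g ⋙ Comma.snd (𝟭 D) G).map WalkingParallelPairHom.right)) G :=
    preservesLimit_parallelPair_of_split _ _ G
  have hpres' : PreservesLimit (parallelPair f g ⋙ Comma.snd (𝟭 D) G) G :=
    preservesLimit_of_iso_diagram G
      (diagramIsoParallelPair (parallelPair f g ⋙ Comma.snd (𝟭 D) G)).symm
  apply createsLimitOfReflectsIso
  intro c t
  have pf := prodFst_preservesLimit (parallelPair f g ⋙ sconeForget G)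
  have ps := prodSnd_preservesLimit (parallelPair f g ⋙ sconeForget G)
  let c₁ : Cone (parallelPair f g ⋙ Comma.fst (𝟭 D) G) :=
    (CategoryTheory.Prod.fst D C).mapCone c
  let c₂ : Cone (parallelPair f g ⋙ Comma.snd (𝟭 D) G) :=
    (CategoryTheory.Prod.snd D C).mapCone c
  have t₁ : IsLimit c₁ := isLimitOfPreserves (CategoryTheory.Prod.fst D C) t
  have t₂ : IsLimit c₂ := isLimitOfPreserves (CategoryTheory.Prod.snd D C) t
  exact
    { liftedCone := Comma.coneOfPreserves (parallelPair f g) c₁ t₂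
      validLift := Cones.ext (Iso.refl _) (fun j => by
        apply Prod.ext
        · exact (Category.id_comp _).symm
        · exact (Category.id_comp _).symm)
      makesLimit := Comma.coneOfPreservesIsLimit (parallelPair f g) t₁ t₂ }

/-- The scone forgetful functor is comonadic. -/
noncomputable def sconeComonadic : ComonadicLeftAdjoint (sconeForget G) := by
  haveI : Comonad.CreatesLimitOfIsCosplitPair (sconeForget G) :=
    ⟨fun f g _ => sconeCreatesLimit G f g⟩
  exact Comonad.comonadicOfCreatesFSplitEqualizers (sconeAdjunction G)

end Scone

end SconeAux


theorem scone_forgetful_functor_comonadic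
    {C : Type u₁} [Category.{v₁} C] {D : Type u₂} [Category.{v₂} D]
    (G : C ⥤ D) [HasBinaryProducts D] :
    Nonempty (ComonadicLeftAdjoint ((Comma.fst (𝟭 D) G).prod' (Comma.snd (𝟭 D) G))) := by
  exact ⟨SconeAux.sconeComonadic G⟩
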